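/- Let σ < π be permutations in the classical permutation pattern order, with π of length n. If there exists a linear ordering of the embeddings of σ in π (which are the atoms of Â*(σ,π)) satisfying condition (R2) in the bounded poset Â*(σ,π), then Â*(σ,π) admits a recursive atom ordering. -/

import Mathlib

attribute [local instance] Classical.propDecidable

noncomputable instance {α : Type*} [Fintype α] : Fintype (WithBot α) :=
  inferInstanceAs (Fintype (Option α))
noncomputable instance {α : Type*} [Fintype α] : Fintype (WithTop α) :=
  inferInstanceAs (Fintype (Option α))

/-- The Möbius function of a finite partial order. -/
noncomputable def mob {α : Type*} [Preorder α] [Fintype α] (a b : α) : ℤ :=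
  letI := Classical.decEq α
  letI : DecidableRel (α := α) (· ≤ ·) := Classical.decRel _
  letI : DecidableRel (α := α) (· < ·) := Classical.decRel _
  letI : LocallyFiniteOrder α := Fintype.toLocallyFiniteOrder
  IncidenceAlgebra.mu ℤ a b

/-- The bounded poset obtained by adjoining a new minimum `0̂` and maximum `1̂`. -/
abbrev Bd (α : Type*) := WithBot (WithTop α)

/-- The Möbius number `μ(0̂,1̂)` of a finite poset with a new minimum and maximum adjoined. -/
noncomputable def mobHat (α : Type*) [Preorder α] [Fintype α] : ℤ :=
  mob (⊥ : Bd α) ⊤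

/-- Classical pattern containment for (reduced) permutations. -/
def PermLE {m n : ℕ} (σ : Equiv.Perm (Fin m)) (π : Equiv.Perm (Fin n)) : Prop :=
  ∃ f : Fin m → Fin n, StrictMono f ∧ ∀ i j : Fin m, σ i < σ j ↔ π (f i) < π (f j)

/-- Strict classical pattern containment. -/
def PermLT {m n : ℕ} (σ : Equiv.Perm (Fin m)) (π : Equiv.Perm (Fin n)) : Prop :=
  PermLE σ π ∧ ¬ PermLE π σ

/-- `red π S` is the permutation of length `S.card` order-isomorphic to `π`
restricted to the set of positions `S`. -/
noncomputable def red {n : ℕ} (π : Equiv.Perm (Fin n)) (S : Finset (Fin n)) :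
    Equiv.Perm (Fin S.card) := by
  classical
  have hcard : (S.image fun x => π x).card = S.card :=
    Finset.card_image_of_injective _ π.injective
  refine Equiv.ofBijective (fun i =>
    ((S.image fun x => π x).orderIsoOfFin hcard).symm
      ⟨π (S.orderIsoOfFin rfl i), Finset.mem_image_of_mem _ (S.orderIsoOfFin rfl i).2⟩)
    (Finite.injective_iff_bijective.mp ?_)
  intro i j hij
  have h2 := congrArg (fun z => ((((S.image fun x => π x).orderIsoOfFin hcard) z : Fin n)))
    hij
  simp only [OrderIso.apply_symm_apply] at h2
  have h4 := π.injective h2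
  have h5 : (S.orderIsoOfFin rfl) i = (S.orderIsoOfFin rfl) j := Subtype.ext h4
  exact (S.orderIsoOfFin rfl).injective h5

/-- `S` is an embedding (occurrence set) of `σ` in `π`, i.e. `red(π|_S) = σ`. -/
def IsEmb {n m : ℕ} (π : Equiv.Perm (Fin n)) (S : Finset (Fin n))
    (σ : Equiv.Perm (Fin m)) : Prop :=
  ∃ h : S.card = m, ∀ i : Fin S.card, (red π S i : ℕ) = (σ (Fin.cast h i) : ℕ)

/-- `E(σ,π)`: the number of embeddings of `σ` in `π`. -/
noncomputable def permE {m n : ℕ} (σ : Equiv.Perm (Fin m)) (π : Equiv.Perm (Fin n)) : ℕ :=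
  (Finset.univ.filter fun S : Finset (Fin n) => IsEmb π S σ).card

/-- The poset `A*(λ,π)` of proper position sets `S ⊊ Fin n` with `λ ≤ red(π|_S)`,
ordered by inclusion. -/
abbrev AstarP {n k : ℕ} (π : Equiv.Perm (Fin n)) (lam : Equiv.Perm (Fin k)) :=
  {S : Finset (Fin n) // S ≠ Finset.univ ∧ PermLE lam (red π S)}

/-- The predecessor position. -/
def predPos {n : ℕ} (p : Fin n) : Fin n :=
  ⟨p.1 - 1, lt_of_le_of_lt (Nat.sub_le p.1 1) p.2⟩

/-- `p` lies in the tail of an adjacency of `π`: `p` is not the first position and the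
values of `π` at `p−1` and `p` differ by exactly one (consecutive positions in a maximal
block on which the values increase by exactly 1 at each step or decrease by exactly 1 at
each step). -/
def tailPos {n : ℕ} (π : Equiv.Perm (Fin n)) (p : Fin n) : Prop :=
  0 < p.1 ∧ ((π p : ℕ) = (π (predPos p) : ℕ) + 1 ∨ (π (predPos p) : ℕ) = (π p : ℕ) + 1)

/-- A normal embedding: an embedding containing every position in the tail of an
adjacency of `π`. -/
def IsNormalEmb {n m : ℕ} (π : Equiv.Perm (Fin n)) (S : Finset (Fin n))
    (σ : Equiv.Perm (Fin m)) : Prop :=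
  IsEmb π S σ ∧ ∀ p : Fin n, tailPos π p → p ∈ S

/-- `NE(σ,π)`: the number of normal embeddings of `σ` in `π`. -/
noncomputable def permNE {m n : ℕ} (σ : Equiv.Perm (Fin m)) (π : Equiv.Perm (Fin n)) : ℕ :=
  (Finset.univ.filter fun S : Finset (Fin n) => IsNormalEmb π S σ).card

/-- A set of positions is representative if within every adjacency of `π` its positions
form a suffix of the adjacency. -/
def ReprP {n : ℕ} (π : Equiv.Perm (Fin n)) (S : Finset (Fin n)) : Prop :=
  ∀ p : Fin n, tailPos π p → predPos p ∈ S → p ∈ S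

/-- The poset `R*(λ,π)` of representative proper position sets `S ⊊ Fin n` with
`λ ≤ red(π|_S)`, ordered by inclusion. -/
abbrev RstarP {n k : ℕ} (π : Equiv.Perm (Fin n)) (lam : Equiv.Perm (Fin k)) :=
  {S : Finset (Fin n) // S ≠ Finset.univ ∧ ReprP π S ∧ PermLE lam (red π S)}

/-- The element of the bounded poset `Bd α` corresponding to `a : α`. -/
def toBd {α : Type*} (a : α) : Bd α := ((a : WithTop α) : Bd α)

/-- A rooted chain: a saturated chain starting at the bottom element. -/
def RootedChain {α : Type*} [Preorder α] [OrderBot α] (c : List α) : Prop :=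
  c.head? = some ⊥ ∧ c.Chain' (· ⋖ ·)

/-- The poset `α` (with bottom element `0̂`) admits a recursive atom ordering: there is
an assignment, to each rooted interval `[t,1̂]_c`, of a linear ordering `ord c` of the
atoms of `t` (the elements covering `t`), satisfying conditions (R1) and (R2). -/
def HasRAO (α : Type*) [PartialOrder α] [OrderBot α] : Prop :=
  ∃ ord : List α → α → α → Prop,
    (∀ c : List α, RootedChain c → ∀ t : α, c.getLast? = some t →
      ((∀ a b : α, t ⋖ a → t ⋖ b → a ≠ b → (ord c a b ∨ ord c b a)) ∧
       (∀ a b : α, ord c a b → ¬ ord c b a) ∧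
       (∀ a b d : α, ord c a b → ord c b d → ord c a d) ∧
       -- (R2)
       (∀ a b : α, t ⋖ a → t ⋖ b → ord c a b → ∀ y : α, a ≤ y → b ≤ y →
         ∃ k, t ⋖ k ∧ ord c k b ∧ ∃ z, b ⋖ z ∧ z ≤ y ∧ k < z))) ∧
    -- (R1)
    (∀ (c' : List α) (β t : α), RootedChain (c' ++ [t]) → c'.getLast? = some β →
      ∀ a b : α, t ⋖ a → t ⋖ b →
        (∃ γ, β ⋖ γ ∧ ord c' γ t ∧ γ ⋖ a) →
        ¬ (∃ γ, β ⋖ γ ∧ ord c' γ t ∧ γ ⋖ b) → ord (c' ++ [t]) a b)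

lemma red_lt_iff {n : ℕ} (π : Equiv.Perm (Fin n)) (S : Finset (Fin n)) (i j : Fin S.card) :
    red π S i < red π S j ↔
      π (S.orderIsoOfFin rfl i) < π (S.orderIsoOfFin rfl j) := by
  classical
  unfold red
  simp only [Equiv.ofBijective_apply]
  rw [OrderIso.lt_iff_lt]
  exact Subtype.mk_lt_mk
lemma permLE_card_le {k c : ℕ} {lam : Equiv.Perm (Fin k)} {τ : Equiv.Perm (Fin c)}
    (h : PermLE lam τ) : k ≤ c := by
  obtain ⟨f, hf, -⟩ := h
  simpa using Fintype.card_le_of_injective f hf.injective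

lemma strictMono_fin_self_id {m : ℕ} {f : Fin m → Fin m} (hf : StrictMono f) : f = id := by
  have hinj : Function.Injective f := hf.injective
  have hbij : Function.Bijective f := (Finite.injective_iff_bijective).mp hinj
  have hr : Set.range f = Set.range (id : Fin m → Fin m) := by
    rw [Set.range_eq_univ.mpr hbij.2]; simp
  haveI : WellFoundedLT (Fin m) := Finite.to_wellFoundedLT
  exact (StrictMono.range_inj hf strictMono_id).mp hr

lemma perm_val_eq_of_lt_iff {c m : ℕ} (τ : Equiv.Perm (Fin c)) (σ : Equiv.Perm (Fin m))
    (h : c = m)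
    (hlt : ∀ i j : Fin c, τ i < τ j ↔ σ (Fin.cast h i) < σ (Fin.cast h j)) :
    ∀ i, (τ i : ℕ) = σ (Fin.cast h i) := by
  subst h
  simp only [Fin.cast_refl, id] at hlt ⊢
  have : StrictMono (fun a => τ (σ.symm a)) := by
    intro a b hab
    have := (hlt (σ.symm a) (σ.symm b)).mpr (by simpa using hab)
    exact this
  have hid := strictMono_fin_self_id this
  intro i
  have := congrFun hid (σ i)
  simp only [Equiv.symm_apply_apply, id] at this
  rw [this]
lemma permLE_red_mono {k n : ℕ} (lam : Equiv.Perm (Fin k)) (π : Equiv.Perm (Fin n))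
    {S S' : Finset (Fin n)} (hSS : S ⊆ S') (h : PermLE lam (red π S)) :
    PermLE lam (red π S') := by
  classical
  obtain ⟨f, hf, hord⟩ := h
  set e : Fin S.card → Fin S'.card := fun i =>
    (S'.orderIsoOfFin rfl).symm ⟨(S.orderIsoOfFin rfl i : Fin n), hSS (S.orderIsoOfFin rfl i).2⟩
    with he
  have hee : ∀ i, (S'.orderIsoOfFin rfl (e i) : Fin n) = (S.orderIsoOfFin rfl i : Fin n) := by
    intro i; rw [he]; simp
  have hmono : StrictMono e := by
    intro i j hij
    rw [he]
    apply (OrderIso.lt_iff_lt _).mpr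
    exact Subtype.mk_lt_mk.mpr (Subtype.coe_lt_coe.mpr ((S.orderIsoOfFin rfl).lt_iff_lt.mpr hij))
  refine ⟨e ∘ f, hmono.comp hf, fun i j => ?_⟩
  rw [hord i j, red_lt_iff, red_lt_iff, Function.comp_apply, Function.comp_apply,
    hee, hee]
lemma exists_isEmb_subset {m n : ℕ} {σ : Equiv.Perm (Fin m)} {π : Equiv.Perm (Fin n)}
    {S : Finset (Fin n)} (h : PermLE σ (red π S)) :
    ∃ T : Finset (Fin n), T ⊆ S ∧ IsEmb π T σ := by
  classical
  obtain ⟨f, hf, hord⟩ := h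
  set g : Fin m → Fin n := fun i => (S.orderIsoOfFin rfl (f i) : Fin n) with hg
  have hgmono : StrictMono g := by
    intro i j hij
    exact Subtype.coe_lt_coe.mpr ((S.orderIsoOfFin rfl).lt_iff_lt.mpr (hf hij))
  set T : Finset (Fin n) := Finset.image g Finset.univ with hT
  have hTS : T ⊆ S := by
    intro x hx
    rw [hT] at hx
    obtain ⟨i, -, rfl⟩ := Finset.mem_image.mp hx
    exact (S.orderIsoOfFin rfl (f i)).2
  have hcard : T.card = m := by
    rw [hT, Finset.card_image_of_injective _ hgmono.injective, Finset.card_univ,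
      Fintype.card_fin]
  have hemb : ∀ i : Fin T.card, (T.orderIsoOfFin rfl i : Fin n) = g (Fin.cast hcard i) := by
    have := Finset.orderEmbOfFin_unique (f := fun i : Fin T.card => g (Fin.cast hcard i))
      (rfl : T.card = T.card) (fun x =>
        Finset.mem_image_of_mem _ (Finset.mem_univ _))
      (fun i j hij => hgmono (by simpa using hij))
    intro i
    rw [Finset.coe_orderIsoOfFin_apply, ← this]
  refine ⟨T, hTS, hcard, ?_⟩
  apply perm_val_eq_of_lt_iff
  intro i j
  rw [red_lt_iff, hemb i, hemb j]
  constructor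
  · intro hlt
    exact (hord _ _).mpr ((red_lt_iff π S (f _) (f _)).mpr hlt)
  · intro hlt
    exact (red_lt_iff π S (f _) (f _)).mp ((hord _ _).mp hlt)
lemma fin_cast_strictMono {a b : ℕ} (h : a = b) : StrictMono (Fin.cast h) := by
  intro i j hij
  rw [Fin.lt_def, Fin.coe_cast, Fin.coe_cast]
  exact hij

lemma isEmb_permLE {m n : ℕ} {σ : Equiv.Perm (Fin m)} {π : Equiv.Perm (Fin n)}
    {T : Finset (Fin n)} (h : IsEmb π T σ) : PermLE σ (red π T) := by
  obtain ⟨hc, hv⟩ := h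
  refine ⟨fun i => Fin.cast hc.symm i, fin_cast_strictMono _, ?_⟩
  intro i j
  rw [Fin.lt_def, Fin.lt_def (a := red π T _), hv, hv]
  have : ∀ a : Fin m, Fin.cast hc (Fin.cast hc.symm a) = a := by
    intro a; apply Fin.ext; rw [Fin.coe_cast, Fin.coe_cast]
  rw [this, this]

lemma permLE_red_univ {m n : ℕ} {σ : Equiv.Perm (Fin m)} {π : Equiv.Perm (Fin n)}
    (h : PermLE σ π) : PermLE σ (red π (Finset.univ : Finset (Fin n))) := by
  classical
  obtain ⟨f, hf, hord⟩ := h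
  have hcard : (Finset.univ : Finset (Fin n)).card = n := by
    rw [Finset.card_univ, Fintype.card_fin]
  have huniv : ∀ i : Fin (Finset.univ : Finset (Fin n)).card,
      ((Finset.univ : Finset (Fin n)).orderIsoOfFin rfl i : Fin n) = Fin.cast hcard i := by
    have := Finset.orderEmbOfFin_unique
      (f := fun i : Fin (Finset.univ : Finset (Fin n)).card => Fin.cast hcard i)
      (rfl : (Finset.univ : Finset (Fin n)).card = _)
      (fun x => Finset.mem_univ _)
      (fin_cast_strictMono _)
    intro i
    rw [Finset.coe_orderIsoOfFin_apply, ← this]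
  refine ⟨fun i => Fin.cast hcard.symm (f i), (fin_cast_strictMono _).comp hf, ?_⟩
  intro i j
  rw [red_lt_iff, huniv, huniv]
  have : ∀ a : Fin m, Fin.cast hcard (Fin.cast hcard.symm (f a)) = f a := by
    intro a; apply Fin.ext; rw [Fin.coe_cast, Fin.coe_cast]
  rw [this, this]
  exact hord i j

lemma permLT_card_lt {m n : ℕ} {σ : Equiv.Perm (Fin m)} {π : Equiv.Perm (Fin n)}
    (h : PermLT σ π) : m < n := by
  obtain ⟨⟨f, hf, hord⟩, hnle⟩ := h
  have hle : m ≤ n := by simpa using Fintype.card_le_of_injective f hf.injective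
  rcases lt_or_eq_of_le hle with hlt | heq
  · exact hlt
  · exfalso
    subst heq
    have : f = id := strictMono_fin_self_id hf
    subst this
    exact hnle ⟨id, strictMono_id, fun i j => (hord i j).symm⟩
section OrdAux
variable {α : Type*} [PartialOrder α]

/-- auxiliary predicate: `x` covers some earlier atom -/
def covEarlier (o : α → α → Prop) (β t x : α) : Prop :=
  ∃ γ, β ⋖ γ ∧ o γ t ∧ γ ⋖ x

def ordAux (base emb : α → α → Prop) : List α → α → α → Prop
  | [] => fun _ _ => False
  | [_] => emb
  | t :: β :: rest => fun a b =>
      (covEarlier (ordAux base emb (β :: rest)) β t a ∧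
        ¬ covEarlier (ordAux base emb (β :: rest)) β t b) ∨
      ((covEarlier (ordAux base emb (β :: rest)) β t a ↔
        covEarlier (ordAux base emb (β :: rest)) β t b) ∧ base a b)

lemma ordAux_nil (base emb : α → α → Prop) (a b : α) :
    ordAux base emb [] a b ↔ False := Iff.rfl

lemma ordAux_single (base emb : α → α → Prop) (x a b : α) :
    ordAux base emb [x] a b ↔ emb a b := Iff.rfl

lemma ordAux_cons₂ (base emb : α → α → Prop) (t β : α) (rest : List α) (a b : α) :
    ordAux base emb (t :: β :: rest) a b ↔
      ((covEarlier (ordAux base emb (β :: rest)) β t a ∧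
        ¬ covEarlier (ordAux base emb (β :: rest)) β t b) ∨
      ((covEarlier (ordAux base emb (β :: rest)) β t a ↔
        covEarlier (ordAux base emb (β :: rest)) β t b) ∧ base a b)) := Iff.rfl

lemma ordAux_asymm {base emb : α → α → Prop}
    (hb : ∀ a b, base a b → ¬ base b a) (he : ∀ a b, emb a b → ¬ emb b a) :
    ∀ (l : List α) (a b : α), ordAux base emb l a b → ¬ ordAux base emb l b a := by
  intro l a b
  match l with
  | [] => exact fun h => absurd h id
  | [x] => exact he a b
  | t :: β :: rest =>
    rw [ordAux_cons₂, ordAux_cons₂]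
    rintro (⟨h1, h2⟩ | ⟨h1, h2⟩) (⟨h3, h4⟩ | ⟨h3, h4⟩)
    · exact h2 h3
    · exact h2 (h3.mpr h1)
    · exact h4 (h1.mpr h3)
    · exact hb a b h2 h4

lemma ordAux_transit {base emb : α → α → Prop}
    (hb : ∀ a b d, base a b → base b d → base a d)
    (he : ∀ a b d, emb a b → emb b d → emb a d) :
    ∀ (l : List α) (a b d : α), ordAux base emb l a b → ordAux base emb l b d →
      ordAux base emb l a d := by
  intro l a b d
  match l with
  | [] => exact fun h _ => absurd h id
  | [x] => exact he a b d
  | t :: β :: rest =>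
    rw [ordAux_cons₂, ordAux_cons₂, ordAux_cons₂]
    rintro (⟨h1, h2⟩ | ⟨h1, h2⟩) (⟨h3, h4⟩ | ⟨h3, h4⟩)
    · exact Or.inl ⟨h1, h4⟩
    · exact Or.inl ⟨h1, fun hd => h2 (h3.mpr hd)⟩
    · exact Or.inl ⟨h1.mpr h3, h4⟩
    · exact Or.inr ⟨h1.trans h3, hb a b d h2 h4⟩

end OrdAux
section BdFacts
variable {A : Type*} [PartialOrder A]

lemma toBd_le_iff {a b : A} : toBd a ≤ toBd b ↔ a ≤ b := by
  unfold toBd; rw [WithBot.coe_le_coe, WithTop.coe_le_coe]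

lemma toBd_lt_iff {a b : A} : toBd a < toBd b ↔ a < b := by
  unfold toBd; rw [WithBot.coe_lt_coe, WithTop.coe_lt_coe]

lemma toBd_inj {a b : A} (h : toBd a = toBd b) : a = b := by
  unfold toBd at h; exact_mod_cast h

lemma bot_lt_toBd (a : A) : (⊥ : Bd A) < toBd a := WithBot.bot_lt_coe _

lemma toBd_lt_top (a : A) : toBd a < (⊤ : Bd A) := by
  show ((a : WithTop A) : Bd A) < ((⊤ : WithTop A) : Bd A)
  rw [WithBot.coe_lt_coe]; exact WithTop.coe_lt_top a

lemma toBd_ne_bot (a : A) : toBd a ≠ ⊥ := by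
  unfold toBd; exact WithBot.coe_ne_bot

lemma toBd_ne_top (a : A) : toBd a ≠ (⊤ : Bd A) := (toBd_lt_top a).ne

lemma bd_cases (x : Bd A) : x = ⊥ ∨ x = ⊤ ∨ ∃ a, x = toBd a := by
  rcases x with _ | (_ | a)
  · exact Or.inl rfl
  · exact Or.inr (Or.inl rfl)
  · exact Or.inr (Or.inr ⟨a, rfl⟩)

end BdFacts

section Covers
variable {m n : ℕ} {σ : Equiv.Perm (Fin m)} {π : Equiv.Perm (Fin n)}

lemma astar_le_iff {S T : AstarP π σ} : S ≤ T ↔ S.1 ⊆ T.1 := Iff.rfl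

lemma astar_lt_iff {S T : AstarP π σ} : S < T ↔ S.1 ⊂ T.1 := by
  rw [lt_iff_le_and_ne, Finset.ssubset_iff_subset_ne]
  constructor
  · rintro ⟨h1, h2⟩; exact ⟨h1, fun hv => h2 (Subtype.ext hv)⟩
  · rintro ⟨h1, h2⟩; exact ⟨h1, fun hv => h2 (congrArg Subtype.val hv)⟩

/-- an embedding gives an atom of `Bd (AstarP π σ)` -/
lemma atom_of_isEmb (K : AstarP π σ) (hK : IsEmb π K.1 σ) :
    (⊥ : Bd (AstarP π σ)) ⋖ toBd K := by
  constructor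
  · exact bot_lt_toBd K
  · intro x hx1 hx2
    rcases bd_cases x with rfl | rfl | ⟨L, rfl⟩
    · exact lt_irrefl _ hx1
    · exact not_top_lt (hx2.trans (toBd_lt_top K))
    · have hlt : L < K := toBd_lt_iff.mp hx2
      have hcard : L.1.card < K.1.card := Finset.card_lt_card (astar_lt_iff.mp hlt)
      have hm : m ≤ L.1.card := permLE_card_le L.2.2
      rw [hK.1] at hcard
      omega

/-- atoms of `⊥` in `Bd (AstarP π σ)` are embeddings -/
lemma isEmb_of_atom (h : PermLT σ π) {a : Bd (AstarP π σ)}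
    (ha : (⊥ : Bd (AstarP π σ)) ⋖ a) :
    ∃ K : AstarP π σ, a = toBd K ∧ IsEmb π K.1 σ := by
  classical
  -- AstarP is nonempty
  obtain ⟨T0, hT0sub, hT0emb⟩ := exists_isEmb_subset (permLE_red_univ h.1)
  have hT0ne : T0 ≠ Finset.univ := by
    intro hc
    have := hT0emb.1
    rw [hc, Finset.card_univ, Fintype.card_fin] at this
    exact absurd this.symm (Nat.ne_of_lt (permLT_card_lt h))
  set S0 : AstarP π σ := ⟨T0, hT0ne, isEmb_permLE hT0emb⟩ with hS0
  rcases bd_cases a with rfl | rfl | ⟨K, rfl⟩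
  · exact absurd ha.lt (lt_irrefl _)
  · exact absurd (ha.2 (bot_lt_toBd S0) (toBd_lt_top S0)) (fun hc => hc)
  · -- K is minimal, hence an embedding
    obtain ⟨T, hTsub, hTemb⟩ := exists_isEmb_subset K.2.2
    have hTne : T ≠ Finset.univ := by
      intro hc
      exact K.2.1 (Finset.univ_subset_iff.mp (hc ▸ hTsub))
    set TT : AstarP π σ := ⟨T, hTne, isEmb_permLE hTemb⟩ with hTT
    have hle : TT ≤ K := hTsub
    rcases eq_or_lt_of_le hle with heq | hlt
    · refine ⟨K, rfl, ?_⟩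
      rw [← heq]
      exact hTemb
    · exact absurd (ha.2 (bot_lt_toBd TT) (toBd_lt_iff.mpr hlt)) (fun hc => hc)

/-- covers among proper elements add exactly one position -/
lemma cover_insert {S T : AstarP π σ} (hST : toBd S ⋖ toBd T) :
    ∃ x, x ∉ S.1 ∧ T.1 = insert x S.1 := by
  classical
  have hlt : S.1 ⊂ T.1 := astar_lt_iff.mp (toBd_lt_iff.mp hST.lt)
  obtain ⟨x, hxT, hxS⟩ := Finset.exists_of_ssubset hlt
  refine ⟨x, hxS, ?_⟩
  by_contra hc
  have hsub : insert x S.1 ⊆ T.1 := Finset.insert_subset hxT hlt.1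
  have hne : insert x S.1 ≠ T.1 := fun hv => hc hv.symm
  have hC : insert x S.1 ≠ Finset.univ := by
    intro hv
    rw [hv] at hsub
    exact T.2.1 (Finset.univ_subset_iff.mp hsub)
  set C : AstarP π σ := ⟨insert x S.1, hC,
    permLE_red_mono σ π (Finset.subset_insert x S.1) S.2.2⟩ with hCdef
  have h1 : S < C := astar_lt_iff.mpr (Finset.ssubset_insert hxS)
  have h2 : C < T := astar_lt_iff.mpr (Finset.ssubset_iff_subset_ne.mpr ⟨hsub, hne⟩)
  exact hST.2 (toBd_lt_iff.mpr h1) (toBd_lt_iff.mpr h2)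

/-- adding one new position gives a cover among proper elements -/
lemma cover_of_insert {B Z : AstarP π σ} {x : Fin n} (hx : x ∉ B.1)
    (hZ : Z.1 = insert x B.1) : toBd B ⋖ toBd Z := by
  classical
  constructor
  · exact toBd_lt_iff.mpr (astar_lt_iff.mpr (by rw [hZ]; exact Finset.ssubset_insert hx))
  · intro w hw1 hw2
    rcases bd_cases w with rfl | rfl | ⟨C, rfl⟩
    · exact not_lt_bot hw1
    · exact not_top_lt (hw2.trans (toBd_lt_top Z))
    · have h1 : B.1 ⊂ C.1 := astar_lt_iff.mp (toBd_lt_iff.mp hw1)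
      have h2 : C.1 ⊂ Z.1 := astar_lt_iff.mp (toBd_lt_iff.mp hw2)
      obtain ⟨u, huC, huB⟩ := Finset.exists_of_ssubset h1
      have hux : u = x := by
        have := h2.1 huC
        rw [hZ] at this
        rcases Finset.mem_insert.mp this with h | h
        · exact h
        · exact absurd h huB
      have : Z.1 ⊆ C.1 := by
        rw [hZ]
        exact Finset.insert_subset (hux ▸ huC) h1.1
      exact absurd (h2.2 this) (fun hc => hc)

/-- if adding one position fills everything, the element is covered by `⊤` -/
lemma cover_top_of_insert {B : AstarP π σ} {x : Fin n} (hx : x ∉ B.1)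
    (hZ : insert x B.1 = Finset.univ) : toBd B ⋖ (⊤ : Bd (AstarP π σ)) := by
  classical
  constructor
  · exact toBd_lt_top B
  · intro w hw1 hw2
    rcases bd_cases w with rfl | rfl | ⟨C, rfl⟩
    · exact not_lt_bot hw1
    · exact lt_irrefl _ hw2
    · have h1 : B.1 ⊂ C.1 := astar_lt_iff.mp (toBd_lt_iff.mp hw1)
      obtain ⟨u, huC, huB⟩ := Finset.exists_of_ssubset h1
      have hux : u = x := by
        by_contra hc
        have : u ∈ insert x B.1 := by rw [hZ]; exact Finset.mem_univ _
        rcases Finset.mem_insert.mp this with h | h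
        · exact hc h
        · exact huB h
      have hsub2 : insert x B.1 ⊆ C.1 := Finset.insert_subset (hux ▸ huC) h1.1
      rw [hZ] at hsub2
      exact C.2.1 (Finset.univ_subset_iff.mp hsub2)

end Covers

/-- Let `σ < π` be permutations in the classical pattern order. If
there is a linear ordering `prec` of the embeddings of `σ` in `π` (the atoms of
`Â*(σ,π)`) satisfying condition (R2) in the bounded poset `Â*(σ,π)`, then `Â*(σ,π)`
admits a recursive atom ordering. -/
theorem stmt17 {m n : ℕ} (σ : Equiv.Perm (Fin m)) (π : Equiv.Perm (Fin n))
    (h : PermLT σ π)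
    (prec : Finset (Fin n) → Finset (Fin n) → Prop)
    (htot : ∀ S T : Finset (Fin n), IsEmb π S σ → IsEmb π T σ → S ≠ T →
      (prec S T ∨ prec T S))
    (hasym : ∀ S T : Finset (Fin n), prec S T → ¬ prec T S)
    (htrans : ∀ S T U : Finset (Fin n), prec S T → prec T U → prec S U)
    (hR2 : ∀ S T : AstarP π σ, IsEmb π S.1 σ → IsEmb π T.1 σ → prec S.1 T.1 →
      ∀ y : Bd (AstarP π σ), toBd S ≤ y → toBd T ≤ y →
        ∃ K : AstarP π σ, IsEmb π K.1 σ ∧ prec K.1 T.1 ∧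
          ∃ z : Bd (AstarP π σ), toBd T ⋖ z ∧ z ≤ y ∧ toBd K < z) :
    HasRAO (Bd (AstarP π σ)) := by
  classical
  set emb : Bd (AstarP π σ) → Bd (AstarP π σ) → Prop := fun a b =>
    ∃ S T : AstarP π σ, a = toBd S ∧ b = toBd T ∧ IsEmb π S.1 σ ∧ IsEmb π T.1 σ ∧
      prec S.1 T.1 with hembdef
  have hembasym : ∀ a b : Bd (AstarP π σ), emb a b → ¬ emb b a := by
    rintro a b ⟨S, T, rfl, rfl, hS, hT, hp⟩ ⟨S', T', hb, ha, _, _, hp'⟩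
    have e1 : T = S' := toBd_inj hb
    have e2 : S = T' := toBd_inj ha
    subst e1; subst e2
    exact hasym _ _ hp hp'
  have hembtrans : ∀ a b d : Bd (AstarP π σ), emb a b → emb b d → emb a d := by
    rintro a b d ⟨S, T, rfl, rfl, hS, hT, hp⟩ ⟨T', U, hb, rfl, _, hU, hp'⟩
    have e1 : T = T' := toBd_inj hb
    subst e1
    exact ⟨S, U, rfl, rfl, hS, hU, htrans _ _ _ hp hp'⟩
  have hbaseasym : ∀ a b : Bd (AstarP π σ),
      WellOrderingRel a b → ¬ WellOrderingRel b a :=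
    fun a _ h1 h2 => irrefl_of WellOrderingRel a (_root_.trans h1 h2)
  have hbasetrans : ∀ a b d : Bd (AstarP π σ),
      WellOrderingRel a b → WellOrderingRel b d → WellOrderingRel a d :=
    fun _ _ _ h1 h2 => _root_.trans h1 h2
  refine ⟨fun c => ordAux WellOrderingRel emb c.reverse, ?_, ?_⟩
  · -- conditions on each rooted interval
    intro c hc t ht
    have hasymAll : ∀ a b : Bd (AstarP π σ),
        ordAux WellOrderingRel emb c.reverse a b →
        ¬ ordAux WellOrderingRel emb c.reverse b a :=
      fun a b => ordAux_asymm hbaseasym hembasym c.reverse a b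
    have htransAll := ordAux_transit hbasetrans hembtrans c.reverse
    have hrev : c.reverse.head? = some t := by rw [List.head?_reverse]; exact ht
    refine ⟨?_, hasymAll, htransAll, ?_⟩
    · -- totality
      intro a b hta htb hab
      rcases hrv : c.reverse with _ | ⟨t', rest⟩
      · rw [hrv] at hrev; simp at hrev
      rcases rest with _ | ⟨β, rest'⟩
      · -- singleton chain : t = ⊥
        rw [hrv] at hrev
        have htt : t' = t := by simpa using hrev
        subst htt
        have hcl : c = [t'] := by rw [← List.reverse_reverse c, hrv, List.reverse_singleton]
        have hbot : t' = ⊥ := by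
          have := hc.1; rw [hcl] at this; simpa using this
        subst hbot
        obtain ⟨S, rfl, hS⟩ := isEmb_of_atom h hta
        obtain ⟨T, rfl, hT⟩ := isEmb_of_atom h htb
        have hST : S.1 ≠ T.1 := by
          intro e
          exact hab (congrArg toBd (Subtype.ext e))
        beta_reduce
        rw [hrv]
        rcases htot S.1 T.1 hS hT hST with hp | hp
        · exact Or.inl ⟨S, T, rfl, rfl, hS, hT, hp⟩
        · exact Or.inr ⟨T, S, rfl, rfl, hT, hS, hp⟩
      · -- longer chain : use the well-ordering
        rw [hrv] at hrev
        have htt : t' = t := by simpa using hrev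
        subst htt
        beta_reduce
        rw [hrv]
        rw [ordAux_cons₂, ordAux_cons₂]
        set P := covEarlier (ordAux WellOrderingRel emb (β :: rest')) β t' with hP
        by_cases hPa : P a <;> by_cases hPb : P b
        · rcases trichotomous_of WellOrderingRel a b with h1 | h1 | h1
          · exact Or.inl (Or.inr ⟨iff_of_true hPa hPb, h1⟩)
          · exact absurd h1 hab
          · exact Or.inr (Or.inr ⟨iff_of_true hPb hPa, h1⟩)
        · exact Or.inl (Or.inl ⟨hPa, hPb⟩)
        · exact Or.inr (Or.inl ⟨hPb, hPa⟩)
        · rcases trichotomous_of WellOrderingRel a b with h1 | h1 | h1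
          · exact Or.inl (Or.inr ⟨iff_of_false hPa hPb, h1⟩)
          · exact absurd h1 hab
          · exact Or.inr (Or.inr ⟨iff_of_false hPb hPa, h1⟩)
    · -- (R2)
      intro a b hta htb hord y hay hby
      have hne : a ≠ b := by
        rintro rfl
        exact hasymAll a a hord hord
      rcases hrv : c.reverse with _ | ⟨t', rest⟩
      · rw [hrv] at hrev; simp at hrev
      rcases rest with _ | ⟨β, rest'⟩
      · -- bottom level : use hR2
        rw [hrv] at hrev
        have htt : t' = t := by simpa using hrev
        subst htt
        have hcl : c = [t'] := by rw [← List.reverse_reverse c, hrv, List.reverse_singleton]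
        have hbot : t' = ⊥ := by
          have := hc.1; rw [hcl] at this; simpa using this
        subst hbot
        beta_reduce at hord ⊢
        rw [hrv] at hord ⊢
        obtain ⟨S, T, rfl, rfl, hS, hT, hp⟩ := hord
        obtain ⟨K, hKemb, hKprec, z, hz1, hz2, hz3⟩ := hR2 S T hS hT hp y hay hby
        exact ⟨toBd K, atom_of_isEmb K hKemb,
          ⟨K, T, rfl, rfl, hKemb, hT, hKprec⟩, z, hz1, hz2, hz3⟩
      · -- higher level : geometric argument
        rw [hrv] at hrev
        have htt : t' = t := by simpa using hrev
        subst htt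
        -- t is not ⊥
        have hcl : c = rest'.reverse ++ [β, t'] := by
          rw [← List.reverse_reverse c, hrv]
          simp
        have hβt : β ⋖ t' := by
          have hcc := hc.2
          rw [hcl] at hcc
          exact List.isChain_pair.mp (hcc.suffix ⟨rest'.reverse, rfl⟩)
        have htbot : t' ≠ ⊥ := fun e => not_lt_bot (e ▸ hβt.lt)
        have httop : t' ≠ ⊤ := fun e => not_top_lt (e ▸ hta.lt)
        rcases bd_cases t' with rfl | rfl | ⟨S, rfl⟩
        · exact absurd rfl htbot
        · exact absurd rfl httop
        -- a and b are proper elements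
        have habot : a ≠ ⊥ := fun e => not_lt_bot (e ▸ hta.lt)
        have hbbot : b ≠ ⊥ := fun e => not_lt_bot (e ▸ htb.lt)
        have hbtop : b ≠ ⊤ := by
          intro e
          subst e
          have hatop : a ≠ ⊤ := hne
          rcases bd_cases a with e2 | e2 | ⟨A', rfl⟩
          · exact habot e2
          · exact hatop e2
          · exact htb.2 hta.lt (toBd_lt_top A')
        have hatop : a ≠ ⊤ := by
          intro e
          subst e
          rcases bd_cases b with e2 | e2 | ⟨B', rfl⟩
          · exact hbbot e2
          · exact hbtop e2
          · exact hta.2 htb.lt (toBd_lt_top B')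
        rcases bd_cases a with e2 | e2 | ⟨A', rfl⟩
        · exact absurd e2 habot
        · exact absurd e2 hatop
        rcases bd_cases b with e2 | e2 | ⟨B', rfl⟩
        · exact absurd e2 hbbot
        · exact absurd e2 hbtop
        obtain ⟨x, hxS, hA⟩ := cover_insert hta
        have hSB : S.1 ⊆ B'.1 := (astar_lt_iff.mp (toBd_lt_iff.mp htb.lt)).1
        have hAB : ¬ A'.1 ⊆ B'.1 := by
          intro hsub
          rcases eq_or_lt_of_le (astar_le_iff.mpr hsub : A' ≤ B') with e | hlt
          · exact hne (congrArg toBd e)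
          · exact htb.2 hta.lt (toBd_lt_iff.mpr hlt)
        have hxA : x ∈ A'.1 := by rw [hA]; exact Finset.mem_insert_self x S.1
        have hxB : x ∉ B'.1 := by
          obtain ⟨u, huA, huB⟩ := Finset.not_subset.mp hAB
          have hux : u = x := by
            rw [hA] at huA
            rcases Finset.mem_insert.mp huA with e | e
            · exact e
            · exact absurd (hSB e) huB
          rw [← hux]; exact huB
        -- A' is strictly contained in Z := insert x B'.1
        have hAZ : A'.1 ⊂ insert x B'.1 := by
          constructor
          · rw [hA]; exact Finset.insert_subset_insert x hSB
          · intro hsub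
            obtain ⟨w, hwB, hwS⟩ := Finset.exists_of_ssubset
              (astar_lt_iff.mp (toBd_lt_iff.mp htb.lt))
            have hwZ : w ∈ insert x B'.1 := Finset.mem_insert_of_mem hwB
            have hwA : w ∈ A'.1 := hsub hwZ
            rw [hA] at hwA
            rcases Finset.mem_insert.mp hwA with e | e
            · rw [e] at hwB; exact hxB hwB
            · exact hwS e
        by_cases hZu : insert x B'.1 = Finset.univ
        · -- z = ⊤
          have hytop : y = ⊤ := by
            rcases bd_cases y with rfl | rfl | ⟨Y, rfl⟩
            · exact absurd (le_bot_iff.mp hay) (toBd_ne_bot A')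
            · rfl
            · exfalso
              have hAY : A'.1 ⊆ Y.1 := astar_le_iff.mp (toBd_le_iff.mp hay)
              have hBY : B'.1 ⊆ Y.1 := astar_le_iff.mp (toBd_le_iff.mp hby)
              have : insert x B'.1 ⊆ Y.1 := Finset.insert_subset (hAY hxA) hBY
              rw [hZu] at this
              exact Y.2.1 (Finset.univ_subset_iff.mp this)
          refine ⟨toBd A', hta, hord, ⊤, cover_top_of_insert hxB hZu, ?_, toBd_lt_top A'⟩
          rw [hytop]
        · -- z = toBd ZZ
          have hZne : insert x B'.1 ≠ Finset.univ := hZu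
          set ZZ : AstarP π σ := ⟨insert x B'.1, hZne,
            permLE_red_mono σ π hAZ.1 A'.2.2⟩ with hZZ
          refine ⟨toBd A', hta, hord, toBd ZZ, cover_of_insert hxB rfl, ?_,
            toBd_lt_iff.mpr (astar_lt_iff.mpr hAZ)⟩
          rcases bd_cases y with rfl | rfl | ⟨Y, rfl⟩
          · exact absurd (le_bot_iff.mp hay) (toBd_ne_bot A')
          · exact le_top
          · have hAY : A'.1 ⊆ Y.1 := astar_le_iff.mp (toBd_le_iff.mp hay)
            have hBY : B'.1 ⊆ Y.1 := astar_le_iff.mp (toBd_le_iff.mp hby)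
            exact toBd_le_iff.mpr (Finset.insert_subset (hAY hxA) hBY)
  · -- (R1)
    intro c' β t hrc hlast a b hta htb hex hnex
    have hr : (c' ++ [t]).reverse = t :: c'.reverse := by simp
    rcases hrv : c'.reverse with _ | ⟨β', rest⟩
    · have : c'.reverse.head? = some β := by rw [List.head?_reverse]; exact hlast
      rw [hrv] at this; simp at this
    have hββ : β' = β := by
      have : c'.reverse.head? = some β := by rw [List.head?_reverse]; exact hlast
      rw [hrv] at this; simpa using this
    subst hββ
    beta_reduce at hex hnex ⊢
    rw [hr, hrv, ordAux_cons₂]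
    rw [hrv] at hex hnex
    exact Or.inl ⟨hex, hnex⟩
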